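/- Let κ > 0, let {q_i}_{i≥1} be an enumeration of the rational numbers, let V = ⋃_{i≥1} (q_i − κ·2^{−(i+1)}, q_i + κ·2^{−(i+1)}), K = ℝ\V, and α = χ_K the characteristic function of K. Let T > 0 and let u ∈ L^∞([0,T]×ℝ) be a weak solution of u_t + (α(x)·u(1−u))_x = 0, i.e. ∫₀^T∫_ℝ [u φ_t + α(x)u(1−u) φ_x] dx dt = 0 for every φ ∈ C^∞_c((0,T)×ℝ), and assume the map t ↦ u(t,·) is continuous from [0,T] into L^∞(ℝ) endowed with the weak* topology. Then u is constant in time, u(t,x) = u(0,x) =: ū(x) for all t ∈ [0,T], and ū(x) ∈ {0,1} for almost every x ∈ K. -/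

import Mathlib

open MeasureTheory Set Filter Topology

/-- The open set `V = ⋃ᵢ (qᵢ − κ 2^{−(i+1)}, qᵢ + κ 2^{−(i+1)})` covering the
rationals (with the enumeration indexed by `ℕ` starting at `0`). -/
def Vset (κ : ℝ) (q : ℕ → ℝ) : Set ℝ :=
  ⋃ i : ℕ, Ioo (q i - κ * (2:ℝ)^(-(i:ℤ) - 2)) (q i + κ * (2:ℝ)^(-(i:ℤ) - 2))

/-- The closed, totally disconnected set `K = ℝ \ V`. -/
def Kset (κ : ℝ) (q : ℕ → ℝ) : Set ℝ := (Vset κ q)ᶜ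

open Classical in
/-- `α = χ_K`, the characteristic function of `K`. -/
noncomputable def alphaFun (κ : ℝ) (q : ℕ → ℝ) (x : ℝ) : ℝ :=
  if x ∈ Kset κ q then 1 else 0

section Helpers

lemma isOpen_Vset (κ : ℝ) (q : ℕ → ℝ) : IsOpen (Vset κ q) :=
  isOpen_iUnion fun _ => isOpen_Ioo

lemma rat_mem_Vset {κ : ℝ} (hκ : 0 < κ) {q : ℕ → ℝ}
    (hq_range : Set.range q = Set.range ((↑) : ℚ → ℝ)) (r : ℚ) : (r : ℝ) ∈ Vset κ q := by
  have : (r : ℝ) ∈ Set.range q := by rw [hq_range]; exact ⟨r, rfl⟩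
  obtain ⟨i, hi⟩ := this
  have hpos : 0 < κ * (2:ℝ)^(-(i:ℤ) - 2) := by positivity
  exact mem_iUnion.2 ⟨i, by rw [hi]; constructor <;> linarith⟩

end Helpers

lemma exists_antideriv {φ : ℝ → ℝ} (hφ : ContDiff ℝ (⊤ : ℕ∞) φ)
    (hint : ∫ x, φ x = 0) {a b : ℝ} (hab : a ≤ b) (hs : tsupport φ ⊆ Icc a b) :
    ∃ ψ : ℝ → ℝ, ContDiff ℝ (⊤ : ℕ∞) ψ ∧ tsupport ψ ⊆ Icc a b ∧ deriv ψ = φ := by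
  classical
  set ψ : ℝ → ℝ := fun x => ∫ t in a..x, φ t with hψdef
  have hcont : Continuous φ := hφ.continuous
  have hder : ∀ x, HasDerivAt ψ (φ x) x := fun x =>
    intervalIntegral.integral_hasDerivAt_right (hcont.intervalIntegrable _ _)
      (hcont.stronglyMeasurableAtFilter _ _) hcont.continuousAt
  have hderiv : deriv ψ = φ := funext fun x => (hder x).deriv
  have hφz : ∀ t, t ∉ Icc a b → φ t = 0 := fun t ht =>
    image_eq_zero_of_notMem_tsupport (fun hc => ht (hs hc))
  have hzero : ∀ x, x ∉ Icc a b → ψ x = 0 := by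
    intro x hx
    rcases lt_or_ge x a with h | h
    · have h1 : ψ x = -∫ t in Ioc x a, φ t := by
        simp only [hψdef]
        rw [intervalIntegral.integral_symm, intervalIntegral.integral_of_le h.le]
      rw [h1, neg_eq_zero, integral_Ioc_eq_integral_Ioo]
      refine setIntegral_eq_zero_of_forall_eq_zero fun t ht => hφz t ?_
      exact fun hc => absurd hc.1 (not_le.2 ht.2)
    · have hbx : b < x := by
        by_contra hh; exact hx ⟨h, le_of_not_gt hh⟩
      have h1 : ψ x = ∫ t in Ioc a x, φ t := intervalIntegral.integral_of_le h
      rw [h1, ← hint]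
      refine setIntegral_eq_integral_of_ae_compl_eq_zero ?_
      have hane : ∀ᵐ (t : ℝ), t ≠ a := by
        rw [ae_iff]
        simp [measure_singleton a]
      filter_upwards [hane] with t hta ht
      refine hφz t fun hc => ht ⟨lt_of_le_of_ne hc.1 (Ne.symm hta), hc.2.trans hbx.le⟩
  have hts : tsupport ψ ⊆ Icc a b :=
    closure_minimal (fun x hx => by
      by_contra hc
      exact hx (hzero x hc)) isClosed_Icc
  refine ⟨ψ, ?_, hts, hderiv⟩
  rw [contDiff_infty_iff_deriv]
  exact ⟨fun x => (hder x).differentiableAt, by rw [hderiv]; exact hφ⟩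

lemma bddM_nonneg {h : ℝ → ℝ} {M : ℝ} (hb : ∀ x, |h x| ≤ M) : 0 ≤ M :=
  le_trans (abs_nonneg _) (hb 0)

lemma integrable_bdd_mul {h g : ℝ → ℝ} (hm : Measurable h) {M : ℝ} (hb : ∀ x, |h x| ≤ M)
    (hg : Continuous g) (hgs : HasCompactSupport g) :
    Integrable (fun x => h x * g x) := by
  refine Integrable.mono' (((hg.abs.integrable_of_hasCompactSupport hgs.abs).const_mul M))
    ((hm.mul hg.measurable).aestronglyMeasurable) (Eventually.of_forall fun x => ?_)
  rw [Real.norm_eq_abs, abs_mul]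
  exact mul_le_mul_of_nonneg_right (hb x) (abs_nonneg _)

lemma locallyIntegrable_of_bdd {h : ℝ → ℝ} (hm : Measurable h) {M : ℝ} (hb : ∀ x, |h x| ≤ M) :
    LocallyIntegrable h volume := by
  rw [locallyIntegrable_iff]
  intro k hk
  refine Integrable.mono' (integrableOn_const hk.measure_lt_top.ne)
    hm.aestronglyMeasurable.restrict (Eventually.of_forall fun x => hb x)
/-- The key computation: from vanishing against derivatives, pairing with `g`
equals `(∫ g) * c`, where the support bookkeeping is relative to `Icc a b`. -/
lemma pairing_eq {h : ℝ → ℝ} (hm : Measurable h) {M : ℝ} (hb : ∀ x, |h x| ≤ M)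
    {c : ℝ} {ρ : ℝ → ℝ} (hρ : ContDiff ℝ (⊤ : ℕ∞) ρ) (hρs : HasCompactSupport ρ)
    {Iρ : ℝ} (hIρ : Iρ = ∫ x, ρ x) (hIρ0 : Iρ ≠ 0) (hc : c = (∫ x, h x * ρ x) / Iρ)
    {g : ℝ → ℝ} (hg : ContDiff ℝ (⊤ : ℕ∞) g) (hgs : HasCompactSupport g)
    {a b : ℝ} (hab : a ≤ b) (hsub : tsupport g ∪ tsupport ρ ⊆ Icc a b)
    (hz : ∀ ψ : ℝ → ℝ, ContDiff ℝ (⊤ : ℕ∞) ψ → HasCompactSupport ψ →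
        tsupport ψ ⊆ Icc a b → ∫ x, h x * deriv ψ x = 0) :
    ∫ x, h x * g x = (∫ x, g x) * c := by
  classical
  set φ : ℝ → ℝ := fun x => g x - (∫ y, g y) / Iρ * ρ x with hφdef
  have hρint : Integrable ρ := hρ.continuous.integrable_of_hasCompactSupport hρs
  have hgint : Integrable g := hg.continuous.integrable_of_hasCompactSupport hgs
  have hφsm : ContDiff ℝ (⊤ : ℕ∞) φ := hg.sub (contDiff_const.mul hρ)
  have hφint : ∫ x, φ x = 0 := by
    rw [hφdef]
    rw [integral_sub hgint (hρint.const_mul _), integral_const_mul, ← hIρ,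
      div_mul_cancel₀ _ hIρ0, sub_self]
  have hφsup : tsupport φ ⊆ Icc a b := by
    refine subset_trans ?_ hsub
    refine closure_minimal ?_ ((isClosed_tsupport g).union (isClosed_tsupport ρ))
    intro x hx
    by_contra hcon
    simp only [mem_union] at hcon
    rcases not_or.1 hcon with ⟨h1, h2⟩
    have hg0 : g x = 0 := image_eq_zero_of_notMem_tsupport h1
    have hρ0 : ρ x = 0 := image_eq_zero_of_notMem_tsupport h2
    exact hx (by simp [hφdef, hg0, hρ0])
  have hφcs : HasCompactSupport φ :=
    IsCompact.of_isClosed_subset isCompact_Icc (isClosed_tsupport φ) hφsup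
  obtain ⟨ψ, hψsm, hψsup, hψd⟩ := exists_antideriv hφsm hφint hab hφsup
  have hψcs : HasCompactSupport ψ :=
    IsCompact.of_isClosed_subset isCompact_Icc (isClosed_tsupport ψ) hψsup
  have h0 := hz ψ hψsm hψcs hψsup
  rw [hψd] at h0
  have hsplit : ∫ x, h x * φ x
      = (∫ x, h x * g x) - (∫ y, g y) / Iρ * ∫ x, h x * ρ x := by
    have e1 : ∀ x, h x * φ x = h x * g x - (∫ y, g y) / Iρ * (h x * ρ x) := by
      intro x; simp [hφdef]; ring
    simp only [e1]
    rw [integral_sub (integrable_bdd_mul hm hb hg.continuous hgs)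
      (((integrable_bdd_mul hm hb hρ.continuous hρs)).const_mul _), integral_const_mul]
  rw [h0] at hsplit
  rw [hc]
  field_simp at hsplit ⊢
  linarith [hsplit]
lemma duBois_global {h : ℝ → ℝ} (hm : Measurable h) {M : ℝ} (hb : ∀ x, |h x| ≤ M)
    (hz : ∀ ψ : ℝ → ℝ, ContDiff ℝ (⊤ : ℕ∞) ψ → HasCompactSupport ψ →
      ∫ x, h x * deriv ψ x = 0) :
    ∃ c : ℝ, ∀ᵐ x, h x = c := by
  classical
  set ρb : ContDiffBump (0 : ℝ) := ⟨1, 2, one_pos, one_lt_two⟩ with hρdef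
  have hIρpos : (0:ℝ) < ∫ x, ρb x := ρb.integral_pos
  set c : ℝ := (∫ x, h x * ρb x) / (∫ x, ρb x) with hc
  refine ⟨c, ?_⟩
  have key : ∀ g : ℝ → ℝ, ContDiff ℝ (⊤ : ℕ∞) g → HasCompactSupport g →
      ∫ x, g x • h x = ∫ x, g x • (fun _ : ℝ => c) x := by
    intro g hg hgs
    -- find an interval containing both supports
    have hS : IsCompact (tsupport g ∪ tsupport ρb) := hgs.union ρb.hasCompactSupport
    obtain ⟨r, hr⟩ := hS.isBounded.subset_closedBall 0
    have hsub : tsupport g ∪ tsupport ρb ⊆ Icc (-(max r 0)) (max r 0) := by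
      intro x hx
      have := hr hx
      rw [Real.closedBall_eq_Icc] at this
      have h1 := this.1
      have h2 := this.2
      have h3 := le_max_left r 0
      constructor
      · simp only [zero_sub] at h1; linarith
      · linarith
    have hab : -(max r 0) ≤ max r 0 := by
      have := le_max_right r 0; linarith
    have hpair := pairing_eq hm hb ρb.contDiff ρb.hasCompactSupport rfl
      (ne_of_gt hIρpos) hc hg hgs hab hsub (fun ψ hψ hψc _ => hz ψ hψ hψc)
    have : ∫ x, g x • (fun _ : ℝ => c) x = (∫ x, g x) * c := by
      simp only [smul_eq_mul]
      rw [← integral_mul_const]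
    rw [this, ← hpair]
    simp only [smul_eq_mul, mul_comm]
  have := ae_eq_of_integral_contDiff_smul_eq (locallyIntegrable_of_bdd hm hb)
    (locallyIntegrable_const c) (fun g hg hgs => key g hg hgs)
  exact this
lemma duBois_Ioo {A B : ℝ} (hAB : A < B) {h : ℝ → ℝ} (hm : Measurable h)
    {M : ℝ} (hb : ∀ x, |h x| ≤ M)
    (hz : ∀ ψ : ℝ → ℝ, ContDiff ℝ (⊤ : ℕ∞) ψ → HasCompactSupport ψ →
      tsupport ψ ⊆ Ioo A B → ∫ x in Ioo A B, h x * deriv ψ x = 0) :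
    ∃ c : ℝ, ∀ᵐ x, x ∈ Ioo A B → h x = c := by
  classical
  have hmid : A < (A+B)/2 := by linarith
  set ρb : ContDiffBump ((A+B)/2) := ⟨(B-A)/4, (B-A)/3, by linarith, by linarith⟩ with hρdef
  have hrOut : ρb.rOut = (B-A)/3 := rfl
  have hρsup : tsupport (ρb : ℝ → ℝ) ⊆ Ioo A B := by
    rw [ρb.tsupport_eq, Real.closedBall_eq_Icc, hrOut]
    intro x hx
    exact ⟨by linarith [hx.1], by linarith [hx.2]⟩
  have hIρpos : (0:ℝ) < ∫ x, ρb x := ρb.integral_pos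
  set c : ℝ := (∫ x, h x * ρb x) / (∫ x, ρb x) with hc
  refine ⟨c, ?_⟩
  have key : ∀ g : ℝ → ℝ, ContDiff ℝ (⊤ : ℕ∞) g → HasCompactSupport g → tsupport g ⊆ Ioo A B →
      ∫ x, g x • (h x - c) = 0 := by
    intro g hg hgs hgsup
    set S : Set ℝ := tsupport g ∪ tsupport (ρb : ℝ → ℝ) with hS
    have hScpt : IsCompact S := hgs.union ρb.hasCompactSupport
    have hSne : S.Nonempty := by
      refine ⟨(A+B)/2, Or.inr ?_⟩
      rw [ρb.tsupport_eq]
      exact Metric.mem_closedBall_self (by rw [hrOut]; linarith)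
    have hSsub : S ⊆ Ioo A B := union_subset hgsup hρsup
    set a : ℝ := sInf S with ha
    set b : ℝ := sSup S with hbdef
    have haS : a ∈ S := hScpt.sInf_mem hSne
    have hbS : b ∈ S := hScpt.sSup_mem hSne
    have hab : a ≤ b := csInf_le_csSup hSne hScpt.bddBelow hScpt.bddAbove
    have hsub : S ⊆ Icc a b := fun x hx =>
      ⟨csInf_le hScpt.bddBelow hx, le_csSup hScpt.bddAbove hx⟩
    have hIcc : Icc a b ⊆ Ioo A B := fun x hx =>
      ⟨lt_of_lt_of_le (hSsub haS).1 hx.1, lt_of_le_of_lt hx.2 (hSsub hbS).2⟩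
    have hz' : ∀ ψ : ℝ → ℝ, ContDiff ℝ (⊤ : ℕ∞) ψ → HasCompactSupport ψ →
        tsupport ψ ⊆ Icc a b → ∫ x, h x * deriv ψ x = 0 := by
      intro ψ hψ hψc hψsup
      have h1 := hz ψ hψ hψc (hψsup.trans hIcc)
      rw [← h1]
      symm
      refine setIntegral_eq_integral_of_forall_compl_eq_zero fun x hx => ?_
      have : deriv ψ x = 0 := by
        by_contra hd
        exact hx (hIcc (hψsup (support_deriv_subset hd)))
      rw [this, mul_zero]
    have hpair := pairing_eq hm hb ρb.contDiff ρb.hasCompactSupport rfl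
      (ne_of_gt hIρpos) hc hg hgs hab (hsub) hz'
    have hgint : Integrable g := hg.continuous.integrable_of_hasCompactSupport hgs
    have e1 : ∀ x, g x • (h x - c) = h x * g x - c * g x := by
      intro x; simp [smul_eq_mul]; ring
    simp only [e1]
    rw [integral_sub (integrable_bdd_mul hm hb hg.continuous hgs) (hgint.const_mul c),
      hpair, integral_const_mul]
    ring
  have := IsOpen.ae_eq_zero_of_integral_contDiff_smul_eq_zero (isOpen_Ioo (a := A) (b := B))
    (((locallyIntegrable_of_bdd hm hb).sub (locallyIntegrable_const c)).locallyIntegrableOn _)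
    (fun g hg hgs hgsub => key g hg hgs hgsub)
  filter_upwards [this] with x hx hxmem
  have := hx hxmem
  simpa [sub_eq_zero] using this

lemma const_on_Icc_of_ae {F : ℝ → ℝ} {T c : ℝ} (hT : 0 < T)
    (hF : ContinuousOn F (Icc 0 T)) (hae : ∀ᵐ x, x ∈ Ioo 0 T → F x = c) :
    ∀ t ∈ Icc 0 T, F t = c := by
  classical
  intro t ht
  set S : Set ℝ := {x | x ∈ Ioo 0 T ∧ F x = c} with hSdef
  have hSsub : S ⊆ Icc 0 T := fun x hx => Ioo_subset_Icc_self hx.1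
  have hclos : t ∈ closure S := by
    by_contra hnc
    rw [Metric.mem_closure_iff] at hnc
    push_neg at hnc
    obtain ⟨ε, hε, hne⟩ := hnc
    obtain ⟨x1, x2, h12, hJ⟩ : ∃ x1 x2 : ℝ, x1 < x2 ∧
        Ioo x1 x2 ⊆ Ioo 0 T ∩ {y | dist t y < ε} := by
      rcases lt_or_eq_of_le ht.2 with h | h
      · refine ⟨t, min (t + ε) T, by simp [hε, h], fun y hy => ?_⟩
        have hy1 := hy.1; have hy2 := hy.2
        have ha : y < t + ε := lt_of_lt_of_le hy2 (min_le_left _ _)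
        have hb : y < T := lt_of_lt_of_le hy2 (min_le_right _ _)
        refine ⟨⟨lt_of_le_of_lt ht.1 hy1, hb⟩, ?_⟩
        show dist t y < ε
        rw [Real.dist_eq, abs_lt]
        constructor <;> linarith
      · refine ⟨max (t - ε) 0, t, by simp only [max_lt_iff]; exact ⟨by linarith, h ▸ hT⟩, fun y hy => ?_⟩
        have hy1 := hy.1; have hy2 := hy.2
        have h1 : t - ε < y := lt_of_le_of_lt (le_max_left _ _) hy1
        have h2 : (0:ℝ) < y := lt_of_le_of_lt (le_max_right _ _) hy1
        refine ⟨⟨h2, lt_of_lt_of_le hy2 (h ▸ le_refl t)⟩, ?_⟩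
        show dist t y < ε
        rw [Real.dist_eq, abs_lt]; constructor <;> linarith
    have hJbad : Ioo x1 x2 ⊆ {x | ¬(x ∈ Ioo 0 T → F x = c)} := by
      intro y hy
      have hy' := hJ hy
      intro hcon
      exact absurd hy'.2 (not_lt.2 (hne y ⟨hy'.1, hcon hy'.1⟩))
    have h0 : volume (Ioo x1 x2) = 0 := measure_mono_null hJbad (ae_iff.1 hae)
    rw [Real.volume_Ioo] at h0
    rw [ENNReal.ofReal_eq_zero] at h0
    linarith
  have hne' : (𝓝[S] t).NeBot := mem_closure_iff_nhdsWithin_neBot.1 hclos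
  have h1 : Tendsto F (𝓝[S] t) (𝓝 (F t)) := (hF t ht).mono hSsub
  have h2 : Tendsto F (𝓝[S] t) (𝓝 c) := by
    refine Tendsto.congr' ?_ tendsto_const_nhds
    filter_upwards [self_mem_nhdsWithin] with x hx
    exact hx.2.symm
  exact tendsto_nhds_unique h1 h2

lemma ae_zero_of_forall_Ioc {h : ℝ → ℝ} (hm : Measurable h) {M : ℝ} (hb : ∀ x, |h x| ≤ M)
    (hI : ∀ a b : ℝ, a < b → ∫ x in Ioc a b, h x = 0) : ∀ᵐ x, h x = 0 := by
  classical
  set fp : ℝ → ENNReal := fun x => ENNReal.ofReal (h x) with hfp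
  set fm : ℝ → ENNReal := fun x => ENNReal.ofReal (-h x) with hfm
  have hmp : Measurable fp := hm.ennreal_ofReal
  have hmm : Measurable fm := hm.neg.ennreal_ofReal
  have hfin : ∀ (f : ℝ → ℝ), Measurable f → (∀ x, |f x| ≤ M) → ∀ a b : ℝ, a < b →
      ∫⁻ x in Ioc a b, ENNReal.ofReal (f x) ≠ ⊤ := by
    intro f hf hfb a b hab
    have : ∫⁻ x in Ioc a b, ENNReal.ofReal (f x) ≤ ∫⁻ _x in Ioc a b, ENNReal.ofReal M := by
      refine lintegral_mono fun x => ENNReal.ofReal_le_ofReal ?_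
      exact le_trans (le_abs_self _) (hfb x)
    refine ne_of_lt (lt_of_le_of_lt this ?_)
    rw [lintegral_const]
    exact ENNReal.mul_lt_top ENNReal.ofReal_lt_top (by simp [Real.volume_Ioc])
  have hIntOn : ∀ a b : ℝ, IntegrableOn h (Ioc a b) := by
    intro a b
    refine Integrable.mono' (integrableOn_const (by simp [Real.volume_Ioc]))
      hm.aestronglyMeasurable.restrict (Eventually.of_forall fun x => hb x)
  have hagree : ∀ ⦃a b : ℝ⦄, a < b →
      volume.withDensity fp (Ioc a b) = volume.withDensity fm (Ioc a b) := by
    intro a b hab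
    rw [withDensity_apply _ measurableSet_Ioc, withDensity_apply _ measurableSet_Ioc]
    have h0 := hI a b hab
    rw [integral_eq_lintegral_pos_part_sub_lintegral_neg_part (hIntOn a b)] at h0
    have h1 : (∫⁻ x in Ioc a b, ENNReal.ofReal (h x)).toReal
        = (∫⁻ x in Ioc a b, ENNReal.ofReal (-h x)).toReal := by linarith
    exact (ENNReal.toReal_eq_toReal_iff' (hfin h hm hb a b hab)
      (hfin (fun x => -h x) hm.neg (fun x => by simpa using hb x) a b hab)).1 h1
  have hext : volume.withDensity fp = volume.withDensity fm := by
    refine Measure.ext_of_Ioc' _ _ (fun a b hab => ?_) hagree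
    rw [withDensity_apply _ measurableSet_Ioc]
    exact hfin h hm hb a b hab
  have hae : fp =ᶠ[ae volume] fm :=
    (withDensity_eq_iff_of_sigmaFinite hmp.aemeasurable hmm.aemeasurable).1 hext
  filter_upwards [hae] with x hx
  have := congrArg ENNReal.toReal hx
  rw [ENNReal.toReal_ofReal', ENNReal.toReal_ofReal'] at this
  rcases le_total (h x) 0 with h1 | h1
  · rw [max_eq_right h1, max_eq_left (neg_nonneg.2 h1)] at this
    linarith
  · rw [max_eq_left h1, max_eq_right (neg_nonpos.2 h1)] at this
    linarith
/-- A smooth bump adapted to `V`: equal to 1 on `[a,b]`, supported in `(a-δ, b+δ)`,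
with derivative vanishing on `K`, provided the `δ`-collars of `a` and `b` lie in `V`. -/
lemma exists_chi {κ : ℝ} {q : ℕ → ℝ} {a b δ : ℝ} (hab : a < b) (hδ : 0 < δ)
    (hcolla : Icc (a - δ) a ⊆ Vset κ q) (hcollb : Icc b (b + δ) ⊆ Vset κ q) :
    ∃ χ : ℝ → ℝ, ContDiff ℝ (⊤ : ℕ∞) χ ∧ HasCompactSupport χ ∧
      (∀ x, 0 ≤ χ x) ∧ (∀ x, χ x ≤ 1) ∧
      (∀ x ∈ Icc a b, χ x = 1) ∧ (∀ x, x ∉ Ioo (a - δ) (b + δ) → χ x = 0) ∧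
      (∀ x ∈ Kset κ q, deriv χ x = 0) := by
  classical
  set c : ℝ := (a + b) / 2 with hcdef
  have hrin : (0:ℝ) < (b - a)/2 + δ/2 := by linarith
  set f : ContDiffBump c := ⟨(b - a)/2 + δ/2, (b - a)/2 + δ, hrin, by linarith⟩ with hfdef
  have hrIn : f.rIn = (b - a)/2 + δ/2 := rfl
  have hrOut : f.rOut = (b - a)/2 + δ := rfl
  refine ⟨fun x => f x, f.contDiff, f.hasCompactSupport, fun x => f.nonneg,
    fun x => f.le_one, ?_, ?_, ?_⟩
  · intro x hx
    refine f.one_of_mem_closedBall ?_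
    rw [Metric.mem_closedBall, Real.dist_eq, hrIn, abs_le]
    constructor <;> [skip; skip] <;> simp only [hcdef] <;>
      [linarith [hx.1]; linarith [hx.2]]
  · intro x hx
    have : x ∉ Function.support f := by
      rw [f.support_eq]
      intro hmem
      rw [Metric.mem_ball, Real.dist_eq, hrOut, abs_lt] at hmem
      exact hx ⟨by simp only [hcdef] at hmem; linarith [hmem.1],
        by simp only [hcdef] at hmem; linarith [hmem.2]⟩
    simpa using Function.notMem_support.1 this
  · intro x hxK
    rcases lt_or_ge (dist x c) f.rIn with hlt | hge
    · have hev : (fun y => f y) =ᶠ[nhds x] (fun _ => (1:ℝ)) := by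
        filter_upwards [Metric.ball_mem_nhds x (by linarith : (0:ℝ) < f.rIn - dist x c)] with y hy
        refine f.one_of_mem_closedBall ?_
        rw [Metric.mem_ball] at hy
        rw [Metric.mem_closedBall, hrIn]
        have h3 := dist_triangle y x c
        rw [dist_comm y x] at h3
        rw [dist_comm y x] at hy
        linarith
      rw [hev.deriv_eq]
      exact deriv_const x 1
    · rcases lt_or_ge f.rOut (dist x c) with hgt | hle
      · have hev : (fun y => f y) =ᶠ[nhds x] (fun _ => (0:ℝ)) := by
          have hopen : IsOpen (Metric.closedBall c f.rOut)ᶜ := Metric.isClosed_closedBall.isOpen_compl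
          filter_upwards [hopen.mem_nhds
            (by rw [mem_compl_iff, Metric.mem_closedBall]; exact not_le.2 hgt)] with y hy
          have : y ∉ Function.support f := by
            rw [f.support_eq]
            exact fun hc => hy (Metric.ball_subset_closedBall hc)
          simpa using Function.notMem_support.1 this
        rw [hev.deriv_eq]
        exact deriv_const x 0
      · exfalso
        rw [Real.dist_eq, hrOut, abs_le] at hle
        rw [Real.dist_eq, hrIn, le_abs] at hge
        have hc2 : c = (a + b) / 2 := rfl
        rw [hc2] at hle hge
        obtain ⟨hle1, hle2⟩ := hle
        apply hxK
        rcases hge with h1 | h1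
        · exact hcollb ⟨by linarith, by linarith⟩
        · exact hcolla ⟨by linarith, by linarith⟩
lemma integrableOn_of_bdd {f : ℝ → ℝ} (hm : Measurable f) {M : ℝ} (hb : ∀ x, |f x| ≤ M)
    {s : Set ℝ} (hs : volume s < ⊤) : IntegrableOn f s :=
  Integrable.mono' (integrableOn_const hs.ne) hm.aestronglyMeasurable.restrict
    (Eventually.of_forall fun x => hb x)

lemma setIntegral_zero_of_chi_pairing {κ : ℝ} (hκ : 0 < κ) {q : ℕ → ℝ}
    (hq_range : Set.range q = Set.range ((↑) : ℚ → ℝ))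
    {h : ℝ → ℝ} (hm : Measurable h) {M : ℝ} (hb : ∀ x, |h x| ≤ M)
    (hpair : ∀ χ : ℝ → ℝ, ContDiff ℝ (⊤ : ℕ∞) χ → HasCompactSupport χ →
      (∀ x ∈ Kset κ q, deriv χ x = 0) → ∫ x, h x * χ x = 0) :
    ∀ a b : ℝ, a < b → ∫ x in Ioc a b, h x = 0 := by
  classical
  intro a b hab
  have hM : 0 ≤ M := le_trans (abs_nonneg _) (hb 0)
  have key : ∀ ε : ℝ, 0 < ε → |∫ x in Ioc a b, h x| ≤ 4 * M * ε := by
    intro ε hε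
    set ε' : ℝ := min ε ((b - a) / 2) with hε'def
    have hε' : 0 < ε' := lt_min hε (by linarith)
    have hε'le : ε' ≤ ε := min_le_left _ _
    -- rational points a' near a, b' near b
    obtain ⟨a', ha'1, ha'2⟩ := exists_rat_btwn (show a < min b (a + ε') by
      rw [lt_min_iff]; exact ⟨hab, by linarith⟩)
    rw [lt_min_iff] at ha'2
    obtain ⟨b', hb'1, hb'2⟩ := exists_rat_btwn (show max (a' : ℝ) (b - ε') < b by
      rw [max_lt_iff]; exact ⟨ha'2.1, by linarith⟩)
    rw [max_lt_iff] at hb'1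
    have hab' : (a' : ℝ) < (b' : ℝ) := hb'1.1
    -- collars inside V
    obtain ⟨ra, hra, hball_a⟩ := Metric.isOpen_iff.1 (isOpen_Vset κ q) _
      (rat_mem_Vset hκ hq_range a')
    obtain ⟨rb, hrb, hball_b⟩ := Metric.isOpen_iff.1 (isOpen_Vset κ q) _
      (rat_mem_Vset hκ hq_range b')
    set δ : ℝ := min (min (ra / 2) (rb / 2)) (min (((a' : ℝ) - a) / 2) ((b - (b' : ℝ)) / 2))
      with hδdef
    have hδ : 0 < δ := by
      refine lt_min (lt_min (by linarith) (by linarith)) (lt_min ?_ ?_)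
      · linarith [ha'1]
      · linarith [hb'2]
    have hδra : δ ≤ ra / 2 := le_trans (min_le_left _ _) (min_le_left _ _)
    have hδrb : δ ≤ rb / 2 := le_trans (min_le_left _ _) (min_le_right _ _)
    have hδa : δ ≤ ((a' : ℝ) - a) / 2 := le_trans (min_le_right _ _) (min_le_left _ _)
    have hδb : δ ≤ (b - (b' : ℝ)) / 2 := le_trans (min_le_right _ _) (min_le_right _ _)
    have hcolla : Icc ((a' : ℝ) - δ) (a' : ℝ) ⊆ Vset κ q := by
      intro y hy
      refine hball_a ?_
      rw [Metric.mem_ball, Real.dist_eq, abs_lt]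
      exact ⟨by linarith [hy.1, hy.2], by linarith [hy.1, hy.2]⟩
    have hcollb : Icc (b' : ℝ) ((b' : ℝ) + δ) ⊆ Vset κ q := by
      intro y hy
      refine hball_b ?_
      rw [Metric.mem_ball, Real.dist_eq, abs_lt]
      exact ⟨by linarith [hy.1, hy.2], by linarith [hy.1, hy.2]⟩
    obtain ⟨χ, hχsm, hχcs, hχ0, hχ1, hχone, hχout, hχK⟩ := exists_chi hab' hδ hcolla hcollb
    have h0 : ∫ x, h x * χ x = 0 := hpair χ hχsm hχcs hχK
    -- the support of χ is inside Ioc a b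
    have hsupp : ∀ x, x ∉ Ioc a b → h x * χ x = 0 := by
      intro x hx
      have : x ∉ Ioo ((a' : ℝ) - δ) ((b' : ℝ) + δ) := by
        intro hmem
        exact hx ⟨by linarith [hmem.1], by linarith [hmem.2]⟩
      rw [hχout x this, mul_zero]
    have hset0 : ∫ x in Ioc a b, h x * χ x = 0 := by
      rw [setIntegral_eq_integral_of_forall_compl_eq_zero hsupp]; exact h0
    -- interval-integral bookkeeping
    have hbd2 : ∀ x, |h x - h x * χ x| ≤ 2 * M := by
      intro x
      have h1 : |h x * χ x| ≤ M := by
        rw [abs_mul]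
        calc |h x| * |χ x| ≤ M * 1 :=
          mul_le_mul (hb x) (abs_le.2 ⟨by linarith [hχ0 x], hχ1 x⟩) (abs_nonneg _) hM
        _ = M := mul_one M
      calc |h x - h x * χ x| ≤ |h x| + |h x * χ x| := abs_sub _ _
        _ ≤ 2 * M := by linarith [hb x]
    have hmeas2 : Measurable fun x => h x - h x * χ x :=
      hm.sub (hm.mul hχsm.continuous.measurable)
    have hII : ∀ x y : ℝ, IntervalIntegrable (fun s => h s - h s * χ s) volume x y := by
      intro x y
      rw [intervalIntegrable_iff]
      exact integrableOn_of_bdd hmeas2 hbd2 measure_Ioc_lt_top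
    have hsplit : ∫ x in a..b, (h x - h x * χ x)
        = (∫ x in a..(a' : ℝ), (h x - h x * χ x)) + (∫ x in (a' : ℝ)..(b' : ℝ), (h x - h x * χ x))
          + ∫ x in (b' : ℝ)..b, (h x - h x * χ x) := by
      rw [intervalIntegral.integral_add_adjacent_intervals (hII a a') (hII a' b'),
        intervalIntegral.integral_add_adjacent_intervals
          ((hII a a').trans (hII a' b')) (hII b' b)]
    have hmid : ∫ x in (a' : ℝ)..(b' : ℝ), (h x - h x * χ x) = 0 := by
      have heq : EqOn (fun x => h x - h x * χ x) (fun _ => (0:ℝ)) (uIcc (a':ℝ) (b':ℝ)) := by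
        intro x hx
        rw [uIcc_of_le hab'.le] at hx
        show h x - h x * χ x = 0
        rw [hχone x hx]; ring
      rw [intervalIntegral.integral_congr heq, intervalIntegral.integral_zero]
    have hleft : |∫ x in a..(a' : ℝ), (h x - h x * χ x)| ≤ 2 * M * ε := by
      have := intervalIntegral.norm_integral_le_of_norm_le_const
        (C := 2 * M) (f := fun x => h x - h x * χ x) (a := a) (b := (a' : ℝ))
        (fun x _ => hbd2 x)
      rw [Real.norm_eq_abs] at this
      refine this.trans ?_
      rw [abs_of_nonneg (by linarith [ha'1] : (0:ℝ) ≤ (a' : ℝ) - a)]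
      have : (a' : ℝ) - a ≤ ε := by linarith [ha'2.2]
      nlinarith
    have hright : |∫ x in (b' : ℝ)..b, (h x - h x * χ x)| ≤ 2 * M * ε := by
      have := intervalIntegral.norm_integral_le_of_norm_le_const
        (C := 2 * M) (f := fun x => h x - h x * χ x) (a := (b' : ℝ)) (b := b)
        (fun x _ => hbd2 x)
      rw [Real.norm_eq_abs] at this
      refine this.trans ?_
      rw [abs_of_nonneg (by linarith [hb'2] : (0:ℝ) ≤ b - (b' : ℝ))]
      have : b - (b' : ℝ) ≤ ε := by linarith [hb'1.2]
      nlinarith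
    have htot : ∫ x in a..b, (h x - h x * χ x) = ∫ x in Ioc a b, h x := by
      have hIIh : IntervalIntegrable h volume a b := by
        rw [intervalIntegrable_iff]
        exact integrableOn_of_bdd hm hb measure_Ioc_lt_top
      have hIIhχ : IntervalIntegrable (fun x => h x * χ x) volume a b := by
        rw [intervalIntegrable_iff]
        refine integrableOn_of_bdd (M := M) (hm.mul hχsm.continuous.measurable)
          (fun x => ?_) measure_Ioc_lt_top
        rw [Pi.mul_apply, abs_mul]
        calc |h x| * |χ x| ≤ M * 1 :=
          mul_le_mul (hb x) (abs_le.2 ⟨by linarith [hχ0 x], hχ1 x⟩) (abs_nonneg _) hM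
        _ = M := mul_one M
      rw [intervalIntegral.integral_sub hIIh hIIhχ,
        intervalIntegral.integral_of_le hab.le, intervalIntegral.integral_of_le hab.le,
        hset0, sub_zero]
    rw [← htot, hsplit, hmid, add_zero]
    calc |(∫ x in a..(a' : ℝ), (h x - h x * χ x)) + ∫ x in (b' : ℝ)..b, (h x - h x * χ x)|
        ≤ |∫ x in a..(a' : ℝ), (h x - h x * χ x)| + |∫ x in (b' : ℝ)..b, (h x - h x * χ x)| :=
          abs_add_le _ _
      _ ≤ 2 * M * ε + 2 * M * ε := add_le_add hleft hright
      _ = 4 * M * ε := by ring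
  by_contra hne
  have habs : 0 < |∫ x in Ioc a b, h x| := abs_pos.2 hne
  have := key (|∫ x in Ioc a b, h x| / (4 * M + 1)) (by positivity)
  have h4 : 4 * M * (|∫ x in Ioc a b, h x| / (4 * M + 1)) < |∫ x in Ioc a b, h x| := by
    rw [div_eq_inv_mul, ← mul_assoc]
    have : 4 * M * (4 * M + 1)⁻¹ < 1 := by
      rw [mul_inv_lt_iff₀ (by linarith)]
      linarith
    nlinarith
  linarith


lemma prod_test {T : ℝ} {ψ χ : ℝ → ℝ} (hψ : ContDiff ℝ (⊤ : ℕ∞) ψ) (hψcs : HasCompactSupport ψ)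
    (hψsup : tsupport ψ ⊆ Ioo 0 T) (hχ : ContDiff ℝ (⊤ : ℕ∞) χ) (hχcs : HasCompactSupport χ) :
    ContDiff ℝ (⊤ : ℕ∞) (fun p : ℝ × ℝ => ψ p.1 * χ p.2) ∧
    HasCompactSupport (fun p : ℝ × ℝ => ψ p.1 * χ p.2) ∧
    tsupport (fun p : ℝ × ℝ => ψ p.1 * χ p.2) ⊆ Ioo 0 T ×ˢ (univ : Set ℝ) := by
  have hsm : ContDiff ℝ (⊤ : ℕ∞) (fun p : ℝ × ℝ => ψ p.1 * χ p.2) :=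
    (hψ.comp contDiff_fst).mul (hχ.comp contDiff_snd)
  have hsub : tsupport (fun p : ℝ × ℝ => ψ p.1 * χ p.2) ⊆ tsupport ψ ×ˢ tsupport χ := by
    refine closure_minimal ?_ ((isClosed_tsupport ψ).prod (isClosed_tsupport χ))
    intro p hp
    rcases mul_ne_zero_iff.1 hp with ⟨h1, h2⟩
    exact ⟨subset_closure h1, subset_closure h2⟩
  refine ⟨hsm, ?_, ?_⟩
  · exact IsCompact.of_isClosed_subset (hψcs.prod hχcs) (isClosed_tsupport _) hsub
  · exact hsub.trans (prod_mono hψsup (subset_univ _))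


/-- Theorem 7.4: for the flux `f(x,u) = α(x) u(1−u)` with `α = χ_K`, any bounded
weak solution of `u_t + (α(x) u(1−u))_x = 0` on `[0,T] × ℝ` which is weak*
continuous in time is constant in time, and its (initial) value `ū = u(0,·)`
satisfies `ū(x) ∈ {0,1}` for a.e. `x ∈ K`. -/
theorem unbounded_variation_flux_rigidity
    (κ : ℝ) (hκ : 0 < κ)
    (q : ℕ → ℝ) (hq_inj : Function.Injective q)
    (hq_range : Set.range q = Set.range ((↑) : ℚ → ℝ))
    (T : ℝ) (hT : 0 < T)
    (u : ℝ → ℝ → ℝ) (hmeas : Measurable (Function.uncurry u))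
    (C : ℝ) (hbdd : ∀ t x, |u t x| ≤ C)
    -- `u` is a weak solution of `u_t + (α(x) u(1−u))_x = 0` on `(0,T) × ℝ`
    (hweak : ∀ φ : ℝ × ℝ → ℝ, ContDiff ℝ (⊤ : ℕ∞) φ → HasCompactSupport φ →
      tsupport φ ⊆ Set.Ioo 0 T ×ˢ Set.univ →
      (∫ t in Set.Ioo (0:ℝ) T, ∫ x : ℝ,
        (u t x * deriv (fun s => φ (s, x)) t
          + alphaFun κ q x * (u t x * (1 - u t x)) * deriv (fun y => φ (t, y)) x)) = 0)
    -- `t ↦ u(t,·)` is continuous from `[0,T]` into `L^∞(ℝ)` with the weak* topology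
    (hwstar : ∀ g : ℝ → ℝ, Integrable g →
      ContinuousOn (fun t => ∫ x, u t x * g x) (Set.Icc 0 T)) :
    (∀ t ∈ Set.Icc (0:ℝ) T, u t =ᵐ[volume] u 0) ∧
    (∀ᵐ x, x ∈ Kset κ q → u 0 x = 0 ∨ u 0 x = 1) := by
  classical
  have hone : (1 : WithTop ℕ∞) ≤ ((⊤ : ℕ∞) : WithTop ℕ∞) := by exact_mod_cast le_top
  have hone' : ((⊤ : ℕ∞) : WithTop ℕ∞) ≠ 0 := by simp
  have hC : 0 ≤ C := le_trans (abs_nonneg _) (hbdd 0 0)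
  have hu_sect : ∀ t, Measurable (u t) := fun t => hmeas.comp measurable_prodMk_left
  have halpha_meas : Measurable (alphaFun κ q) := by
    have h1 : Measurable ((Kset κ q).indicator (fun _ => (1:ℝ))) :=
      (measurable_const (a := (1:ℝ))).indicator (isOpen_Vset κ q).measurableSet.compl
    have h2 : alphaFun κ q = (Kset κ q).indicator (fun _ => (1:ℝ)) := by
      funext x
      by_cases hx : x ∈ Kset κ q <;> simp [alphaFun, hx]
    rw [h2]; exact h1
  have halpha01 : ∀ x, |alphaFun κ q x| ≤ 1 := by
    intro x
    unfold alphaFun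
    split <;> simp
  -- Step 1: pairing with admissible test functions is constant in time.
  have star : ∀ χ : ℝ → ℝ, ContDiff ℝ (⊤ : ℕ∞) χ → HasCompactSupport χ →
      (∀ x ∈ Kset κ q, deriv χ x = 0) →
      ∀ t ∈ Icc (0:ℝ) T, (∫ x, u t x * χ x) = ∫ x, u 0 x * χ x := by
    intro χ hχsm hχcs hχK
    set F : ℝ → ℝ := fun t => ∫ x, u t x * χ x with hFdef
    have hχcont : Continuous χ := hχsm.continuous
    have hχint : Integrable χ := hχcont.integrable_of_hasCompactSupport hχcs
    have hint_t : ∀ t, Integrable (fun x => u t x * χ x) :=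
      fun t => integrable_bdd_mul (hu_sect t) (fun x => hbdd t x) hχcont hχcs
    have hFbdd : ∀ t, |F t| ≤ C * ∫ x, |χ x| := by
      intro t
      have h1 : |F t| ≤ ∫ x, |u t x| * |χ x| := by
        simpa [Real.norm_eq_abs, abs_mul] using
          norm_integral_le_integral_norm (fun x => u t x * χ x)
      refine h1.trans ?_
      rw [← integral_const_mul]
      refine integral_mono ?_ (hχint.abs.const_mul C)
        (fun x => mul_le_mul_of_nonneg_right (hbdd t x) (abs_nonneg _))
      simpa [abs_mul] using (hint_t t).abs
    have hFmeas : Measurable F := by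
      have h1 : StronglyMeasurable (fun p : ℝ × ℝ => Function.uncurry u p * χ p.2) :=
        (hmeas.mul (hχcont.measurable.comp measurable_snd)).stronglyMeasurable
      exact h1.integral_prod_right'.measurable
    have hFcont : ContinuousOn F (Icc 0 T) := hwstar χ hχint
    have hweak' : ∀ ψ : ℝ → ℝ, ContDiff ℝ (⊤ : ℕ∞) ψ → HasCompactSupport ψ →
        tsupport ψ ⊆ Ioo 0 T → ∫ s in Ioo (0:ℝ) T, F s * deriv ψ s = 0 := by
      intro ψ hψsm hψcs hψsup
      obtain ⟨hφsm, hφcs, hφsup⟩ := prod_test hψsm hψcs hψsup hχsm hχcs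
      have h0 := hweak _ hφsm hφcs hφsup
      have h1 : ∀ t, (∫ x : ℝ,
          (u t x * deriv (fun s => (fun p : ℝ × ℝ => ψ p.1 * χ p.2) (s, x)) t
            + alphaFun κ q x * (u t x * (1 - u t x))
              * deriv (fun y => (fun p : ℝ × ℝ => ψ p.1 * χ p.2) (t, y)) x))
          = F t * deriv ψ t := by
        intro t
        have e : ∀ x : ℝ,
            u t x * deriv (fun s => (fun p : ℝ × ℝ => ψ p.1 * χ p.2) (s, x)) t
              + alphaFun κ q x * (u t x * (1 - u t x))
                * deriv (fun y => (fun p : ℝ × ℝ => ψ p.1 * χ p.2) (t, y)) x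
            = deriv ψ t * (u t x * χ x) := by
          intro x
          have d1 : deriv (fun s => (fun p : ℝ × ℝ => ψ p.1 * χ p.2) (s, x)) t
              = deriv ψ t * χ x :=
            deriv_mul_const ((hψsm.differentiable hone') t) (χ x)
          have d2 : deriv (fun y => (fun p : ℝ × ℝ => ψ p.1 * χ p.2) (t, y)) x
              = ψ t * deriv χ x :=
            deriv_const_mul (ψ t) ((hχsm.differentiable hone') x)
          rw [d1, d2]
          by_cases hx : x ∈ Kset κ q
          · rw [hχK x hx]; ring
          · have : alphaFun κ q x = 0 := if_neg hx
            rw [this]; ring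
        simp only [e]
        rw [integral_const_mul, mul_comm]
      exact (setIntegral_congr_fun measurableSet_Ioo fun s _ => (h1 s).symm).trans h0
    obtain ⟨c, hc⟩ := duBois_Ioo hT hFmeas hFbdd hweak'
    have hconst := const_on_Icc_of_ae hT hFcont hc
    intro t ht
    rw [show (∫ x, u t x * χ x) = F t from rfl, show (∫ x, u 0 x * χ x) = F 0 from rfl,
      hconst t ht, hconst 0 ⟨le_refl 0, hT.le⟩]
  -- Conclusion 1
  have concl1 : ∀ t ∈ Icc (0:ℝ) T, u t =ᵐ[volume] u 0 := by
    intro t ht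
    set h : ℝ → ℝ := fun x => u t x - u 0 x with hhdef
    have hm' : Measurable h := (hu_sect t).sub (hu_sect 0)
    have hb' : ∀ x, |h x| ≤ 2 * C := by
      intro x
      calc |h x| ≤ |u t x| + |u 0 x| := abs_sub _ _
        _ ≤ 2 * C := by linarith [hbdd t x, hbdd 0 x]
    have hpair : ∀ χ : ℝ → ℝ, ContDiff ℝ (⊤ : ℕ∞) χ → HasCompactSupport χ →
        (∀ x ∈ Kset κ q, deriv χ x = 0) → ∫ x, h x * χ x = 0 := by
      intro χ h1 h2 h3
      have hs := star χ h1 h2 h3 t ht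
      have e : ∀ x, h x * χ x = u t x * χ x - u 0 x * χ x := by
        intro x; rw [hhdef]; ring
      simp only [e]
      rw [integral_sub (integrable_bdd_mul (hu_sect t) (fun x => hbdd t x) h1.continuous h2)
        (integrable_bdd_mul (hu_sect 0) (fun x => hbdd 0 x) h1.continuous h2), hs, sub_self]
    have hIoc := setIntegral_zero_of_chi_pairing hκ hq_range hm' hb' hpair
    have hae := ae_zero_of_forall_Ioc hm' hb' hIoc
    filter_upwards [hae] with x hx
    have : u t x - u 0 x = 0 := hx
    linarith
  refine ⟨concl1, ?_⟩
  -- Conclusion 2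
  set g0 : ℝ → ℝ := fun x => alphaFun κ q x * (u 0 x * (1 - u 0 x)) with hg0def
  have hg0m : Measurable g0 :=
    halpha_meas.mul ((hu_sect 0).mul (measurable_const.sub (hu_sect 0)))
  have hg0b : ∀ x, |g0 x| ≤ C * (1 + C) := by
    intro x
    rw [hg0def]
    simp only
    rw [abs_mul, abs_mul]
    have h2 : |1 - u 0 x| ≤ 1 + C := by
      calc |1 - u 0 x| ≤ |(1:ℝ)| + |u 0 x| := abs_sub _ _
        _ ≤ 1 + C := by simp [hbdd 0 x]
    calc |alphaFun κ q x| * (|u 0 x| * |1 - u 0 x|)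
        ≤ 1 * (C * (1 + C)) := by
          refine mul_le_mul (halpha01 x) ?_ (by positivity) zero_le_one
          exact mul_le_mul (hbdd 0 x) h2 (abs_nonneg _) hC
      _ = C * (1 + C) := one_mul _
  -- the time bump
  set ψb : ContDiffBump (T/2) := ⟨T/4, T/3, by linarith, by linarith⟩ with hψbdef
  have hψrO : ψb.rOut = T/3 := rfl
  have hψsup : tsupport (ψb : ℝ → ℝ) ⊆ Ioo 0 T := by
    rw [ψb.tsupport_eq, Real.closedBall_eq_Icc, hψrO]
    intro x hx
    exact ⟨by linarith [hx.1], by linarith [hx.2]⟩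
  have hψpos : 0 < ∫ s, ψb s := ψb.integral_pos
  have hψcont : Continuous (ψb : ℝ → ℝ) := ψb.continuous
  have hψder0 : ∫ s in Ioo (0:ℝ) T, deriv (fun r => ψb r) s = 0 := by
    have hdiff : ∀ x ∈ uIcc (0:ℝ) T, DifferentiableAt ℝ (fun r => ψb r) x :=
      fun x _ => (ψb.contDiff.differentiable hone') x
    have hderint : IntervalIntegrable (deriv fun r => ψb r) volume 0 T :=
      (ψb.contDiff.continuous_deriv hone).intervalIntegrable 0 T
    have hFTC := intervalIntegral.integral_deriv_eq_sub hdiff hderint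
    have hψ0 : (ψb : ℝ → ℝ) 0 = 0 :=
      image_eq_zero_of_notMem_tsupport (fun hc => (hψsup hc).1.false)
    have hψT : (ψb : ℝ → ℝ) T = 0 :=
      image_eq_zero_of_notMem_tsupport (fun hc => (lt_irrefl T (hψsup hc).2))
    rw [← integral_Ioc_eq_integral_Ioo, ← intervalIntegral.integral_of_le hT.le, hFTC,
      hψ0, hψT, sub_zero]
  have hψint0 : ∫ s in Ioo (0:ℝ) T, (ψb : ℝ → ℝ) s = ∫ s, ψb s := by
    refine setIntegral_eq_integral_of_forall_compl_eq_zero fun x hx => ?_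
    exact image_eq_zero_of_notMem_tsupport (fun hc => hx (hψsup hc))
  -- pairing of g0 with arbitrary derivatives vanishes
  have hA : ∀ χ : ℝ → ℝ, ContDiff ℝ (⊤ : ℕ∞) χ → HasCompactSupport χ →
      ∫ x, g0 x * deriv χ x = 0 := by
    intro χ hχsm hχcs
    have hχcont : Continuous χ := hχsm.continuous
    set I1 : ℝ := ∫ x, u 0 x * χ x with hI1
    set I2 : ℝ := ∫ x, g0 x * deriv χ x with hI2
    obtain ⟨hφsm, hφcs, hφsup⟩ := prod_test ψb.contDiff ψb.hasCompactSupport hψsup hχsm hχcs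
    have h0 := hweak _ hφsm hφcs hφsup
    have h1 : ∀ t ∈ Ioo (0:ℝ) T, (∫ x : ℝ,
        (u t x * deriv (fun s => (fun p : ℝ × ℝ => ψb p.1 * χ p.2) (s, x)) t
          + alphaFun κ q x * (u t x * (1 - u t x))
            * deriv (fun y => (fun p : ℝ × ℝ => ψb p.1 * χ p.2) (t, y)) x))
        = deriv (fun r => ψb r) t * I1 + (ψb : ℝ → ℝ) t * I2 := by
      intro t ht
      have hae := concl1 t (Ioo_subset_Icc_self ht)
      have e1 : (∫ x : ℝ,
          (u t x * deriv (fun s => (fun p : ℝ × ℝ => ψb p.1 * χ p.2) (s, x)) t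
            + alphaFun κ q x * (u t x * (1 - u t x))
              * deriv (fun y => (fun p : ℝ × ℝ => ψb p.1 * χ p.2) (t, y)) x))
          = ∫ x : ℝ, (deriv (fun r => ψb r) t * (u 0 x * χ x)
              + (ψb : ℝ → ℝ) t * (g0 x * deriv χ x)) := by
        refine integral_congr_ae ?_
        filter_upwards [hae] with x hx
        have d1 : deriv (fun s => (fun p : ℝ × ℝ => ψb p.1 * χ p.2) (s, x)) t
            = deriv (fun r => ψb r) t * χ x :=
          deriv_mul_const ((ψb.contDiff.differentiable hone') t) (χ x)
        have d2 : deriv (fun y => (fun p : ℝ × ℝ => ψb p.1 * χ p.2) (t, y)) x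
            = (ψb : ℝ → ℝ) t * deriv χ x :=
          deriv_const_mul ((ψb : ℝ → ℝ) t) ((hχsm.differentiable hone') x)
        rw [d1, d2, hx, hg0def]
        ring
      rw [e1, integral_add, integral_const_mul, integral_const_mul]
      · exact (integrable_bdd_mul (hu_sect 0) (fun x => hbdd 0 x) hχcont hχcs).const_mul _
      · exact (integrable_bdd_mul hg0m hg0b (hχsm.continuous_deriv hone)
          hχcs.deriv).const_mul _
    have h2 : ∫ t in Ioo (0:ℝ) T,
        (deriv (fun r => ψb r) t * I1 + (ψb : ℝ → ℝ) t * I2) = 0 :=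
      (setIntegral_congr_fun measurableSet_Ioo fun t ht => (h1 t ht).symm).trans h0
    have hder_int : IntegrableOn (fun t => deriv (fun r => ψb r) t) (Ioo 0 T) volume :=
      ((ψb.contDiff.continuous_deriv hone).integrable_of_hasCompactSupport
        ψb.hasCompactSupport.deriv).integrableOn
    have hψb_int : IntegrableOn (fun t => (ψb : ℝ → ℝ) t) (Ioo 0 T) volume :=
      (hψcont.integrable_of_hasCompactSupport ψb.hasCompactSupport).integrableOn
    rw [integral_add (hder_int.mul_const I1) (hψb_int.mul_const I2),
      integral_mul_const, integral_mul_const, hψder0, hψint0, zero_mul, zero_add] at h2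
    rcases mul_eq_zero.1 h2 with h | h
    · exact absurd h (ne_of_gt hψpos)
    · exact h
  obtain ⟨c0, hc0⟩ := duBois_global hg0m hg0b hA
  have hV0 : 0 < volume (Vset κ q) := by
    have hsub : Ioo (q 0 - κ * (2:ℝ)^(-(0:ℤ) - 2)) (q 0 + κ * (2:ℝ)^(-(0:ℤ) - 2)) ⊆ Vset κ q :=
      subset_iUnion (fun i : ℕ => Ioo (q i - κ * (2:ℝ)^(-(i:ℤ) - 2))
        (q i + κ * (2:ℝ)^(-(i:ℤ) - 2))) 0
    refine lt_of_lt_of_le ?_ (measure_mono hsub)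
    rw [Real.volume_Ioo]
    have hpos : 0 < κ * (2:ℝ)^(-(0:ℤ) - 2) := by positivity
    rw [ENNReal.ofReal_pos]
    linarith
  have hc00 : c0 = 0 := by
    by_contra hne
    have hVsub : Vset κ q ⊆ {x | ¬ g0 x = c0} := by
      intro x hx
      have hα : alphaFun κ q x = 0 := if_neg (fun hc => hc hx)
      simp only [mem_setOf_eq, hg0def]
      rw [hα, zero_mul]
      exact fun hc => hne hc.symm
    have := measure_mono_null hVsub (ae_iff.1 hc0)
    rw [this] at hV0
    exact lt_irrefl _ hV0
  filter_upwards [hc0] with x hx hxK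
  rw [hc00] at hx
  have hα : alphaFun κ q x = 1 := if_pos hxK
  rw [hg0def] at hx
  simp only [hα, one_mul] at hx
  rcases mul_eq_zero.1 hx with h | h
  · exact Or.inl h
  · exact Or.inr (by linarith [sub_eq_zero.1 h])
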